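/- Let L ≥ 3, let p be a real number with 0 < p < 1, set n = 2L² and m = L², and let e_Z, e_X ∈ F₂^{E_L}. Then Σ_{y ∈ im ∂₂} Σ_{y' ∈ im ∂₂^*} (1−p)^{n − wt((e_Z+y) ∨ (e_X+y'))} (p/3)^{wt((e_Z+y) ∨ (e_X+y'))} = 4^{−(n−m+1)} · Σ_{c ∈ ker ∂₁^*} Σ_{c' ∈ ker ∂₁} (1 − 4p/3)^{wt(c ∨ c')} (−1)^{⟨e_Z,c⟩ + ⟨e_X,c'⟩}. (This expresses the probability under the depolarizing channel of the stabilizer coset (e_Z,e_X) + C_Z^⊥ × C_X^⊥ of the toric code as a jointly weighted sum over all pairs of a dual cycle and a primal cycle.) -/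

import Mathlib

/-- Vertices of the `L × L` toric lattice. -/
abbrev TV (L : ℕ) := ZMod L × ZMod L

/-- Edge indices of the toric lattice: `((i,j), 0)` joins `(i,j)` and `(i+1,j)`;
`((i,j), 1)` joins `(i,j)` and `(i,j+1)`. -/
abbrev TE (L : ℕ) := (ZMod L × ZMod L) × Fin 2

/-- Plaquette indices of the toric lattice. -/
abbrev TP (L : ℕ) := ZMod L × ZMod L

/-- First endpoint of an edge. -/
def tEp1 {L : ℕ} (e : TE L) : TV L := e.1

/-- Second endpoint of an edge. -/
def tEp2 {L : ℕ} (e : TE L) : TV L :=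
  if e.2 = 0 then (e.1.1 + 1, e.1.2) else (e.1.1, e.1.2 + 1)

/-- Vertex–edge incidence matrix over `F₂`. -/
def tM1 (L : ℕ) : Matrix (TV L) (TE L) (ZMod 2) := fun v e =>
  if v = tEp1 e ∨ v = tEp2 e then 1 else 0

/-- Edge–plaquette incidence matrix over `F₂`: the plaquette `(i,j)` has the four
boundary edges `((i,j),0)`, `((i,j),1)`, `((i,j+1),0)`, `((i+1,j),1)`. -/
def tM2 (L : ℕ) : Matrix (TE L) (TP L) (ZMod 2) := fun e q =>
  if e = ((q.1, q.2), (0 : Fin 2)) ∨ e = ((q.1, q.2), (1 : Fin 2)) ∨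
      e = ((q.1, q.2 + 1), (0 : Fin 2)) ∨ e = ((q.1 + 1, q.2), (1 : Fin 2))
  then 1 else 0

/-- The boundary map `∂₁ : F₂^{E_L} → F₂^{V_L}`, sending the indicator of an edge to
the sum of the indicators of its two endpoints. -/
def tD1 (L : ℕ) [NeZero L] : (TE L → ZMod 2) →ₗ[ZMod 2] (TV L → ZMod 2) :=
  (tM1 L).mulVecLin

/-- The boundary map `∂₂ : F₂^{P_L} → F₂^{E_L}`, sending the indicator of a plaquette to
the sum of the indicators of its four boundary edges. -/
def tD2 (L : ℕ) [NeZero L] : (TP L → ZMod 2) →ₗ[ZMod 2] (TE L → ZMod 2) :=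
  (tM2 L).mulVecLin

/-- The transpose `∂₁^* : F₂^{E_L} → F₂^{P_L}` of `∂₂`. -/
def tD1s (L : ℕ) [NeZero L] : (TE L → ZMod 2) →ₗ[ZMod 2] (TP L → ZMod 2) :=
  (Matrix.transpose (tM2 L)).mulVecLin

/-- The transpose `∂₂^* : F₂^{V_L} → F₂^{E_L}` of `∂₁`. -/
def tD2s (L : ℕ) [NeZero L] : (TV L → ZMod 2) →ₗ[ZMod 2] (TE L → ZMod 2) :=
  (Matrix.transpose (tM1 L)).mulVecLin

/-- Hamming weight of an `F₂`-vector. -/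
def wt {α : Type*} [Fintype α] (x : α → ZMod 2) : ℕ :=
  (Finset.univ.filter fun a => x a ≠ 0).card

/-- Indicator vector of a finite set of coordinates. -/
def ind {α : Type*} [Fintype α] [DecidableEq α] (D : Finset α) : α → ZMod 2 :=
  fun a => if a ∈ D then 1 else 0

/-- Coordinatewise OR of two `F₂`-vectors (coordinatewise maximum, viewing
coordinates in `{0,1}`). -/
def orv {α : Type*} (x x' : α → ZMod 2) : α → ZMod 2 :=
  fun a => if x a = 0 ∧ x' a = 0 then 0 else 1

lemma zmod2_cases' (a : ZMod 2) : a = 0 ∨ a = 1 := by revert a; decide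

lemma sum_pair_zmod2 {β : Type*} [Fintype β] [DecidableEq β] (a b : β) (hab : a ≠ b)
    (c : β → ZMod 2) :
    ∑ q, (if q = a ∨ q = b then (1 : ZMod 2) else 0) * c q = c a + c b := by
  have key : ∀ q, (if q = a ∨ q = b then (1 : ZMod 2) else 0) * c q =
      (if q = a then c q else 0) + (if q = b then c q else 0) := by
    intro q
    by_cases h1 : q = a <;> by_cases h2 : q = b
    · exact absurd (h1 ▸ h2) hab
    · simp [h1, h2, hab]
    · simp [h1, h2, Ne.symm hab]
    · simp [h1, h2]
  rw [Finset.sum_congr rfl (fun q _ => key q), Finset.sum_add_distrib]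
  simp

section Toric
variable {L : ℕ} [NeZero L] (hL : 3 ≤ L)

lemma one_ne_zero_zmodL (hL : 3 ≤ L) : (1 : ZMod L) ≠ 0 := by
  haveI : Fact (1 < L) := ⟨by omega⟩
  exact one_ne_zero

include hL in
lemma tD2_apply0 (c : TP L → ZMod 2) (i j : ZMod L) :
    tD2 L c ((i, j), (0 : Fin 2)) = c (i, j) + c (i, j - 1) := by
  have hM : ∀ q : TP L, tM2 L ((i, j), (0 : Fin 2)) q
      = if q = (i, j) ∨ q = (i, j - 1) then 1 else 0 := by
    intro q
    unfold tM2
    congr 1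
    simp only [Prod.mk.injEq, eq_iff_iff,
      show ((0 : Fin 2) = 1) ↔ False from by simp,
      show ((1 : Fin 2) = 0) ↔ False from by simp, and_false, false_and, or_false,
      false_or, and_true, true_and]
    constructor
    · rintro (⟨h1, h2⟩ | ⟨h1, h2⟩)
      · exact Or.inl (Prod.ext_iff.2 ⟨h1.symm, h2.symm⟩)
      · exact Or.inr (Prod.ext_iff.2 ⟨h1.symm, by rw [h2]; ring⟩)
    · rintro (rfl | rfl)
      · exact Or.inl ⟨rfl, rfl⟩
      · exact Or.inr ⟨rfl, by ring⟩
  show ((tM2 L).mulVec c) _ = _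
  unfold Matrix.mulVec dotProduct
  simp only [hM]
  refine sum_pair_zmod2 _ _ ?_ c
  intro h
  rw [Prod.ext_iff] at h
  have hj : j = j - 1 := h.2
  exact one_ne_zero_zmodL hL (by linear_combination hj)

include hL in
lemma tD2_apply1 (c : TP L → ZMod 2) (i j : ZMod L) :
    tD2 L c ((i, j), (1 : Fin 2)) = c (i, j) + c (i - 1, j) := by
  have hM : ∀ q : TP L, tM2 L ((i, j), (1 : Fin 2)) q
      = if q = (i, j) ∨ q = (i - 1, j) then 1 else 0 := by
    intro q
    unfold tM2
    congr 1
    simp only [Prod.mk.injEq, eq_iff_iff,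
      show ((0 : Fin 2) = 1) ↔ False from by simp,
      show ((1 : Fin 2) = 0) ↔ False from by simp, and_false, false_and, or_false,
      false_or, and_true, true_and]
    constructor
    · rintro (⟨h1, h2⟩ | ⟨h1, h2⟩)
      · exact Or.inl (Prod.ext_iff.2 ⟨h1.symm, h2.symm⟩)
      · exact Or.inr (Prod.ext_iff.2 ⟨by rw [h1]; ring, h2.symm⟩)
    · rintro (rfl | rfl)
      · exact Or.inl ⟨rfl, rfl⟩
      · exact Or.inr ⟨by ring, rfl⟩
  show ((tM2 L).mulVec c) _ = _
  unfold Matrix.mulVec dotProduct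
  simp only [hM]
  refine sum_pair_zmod2 _ _ ?_ c
  intro h
  rw [Prod.ext_iff] at h
  have hi : i = i - 1 := h.1
  exact one_ne_zero_zmodL hL (by linear_combination hi)

include hL in
lemma tD2s_apply (x : TV L → ZMod 2) (e : TE L) :
    tD2s L x e = x (tEp1 e) + x (tEp2 e) := by
  show ((tM1 L).transpose.mulVec x) _ = _
  unfold Matrix.mulVec dotProduct
  have hM : ∀ v : TV L, (tM1 L).transpose e v = if v = tEp1 e ∨ v = tEp2 e then 1 else 0 :=
    fun v => rfl
  simp only [hM]
  refine sum_pair_zmod2 _ _ ?_ x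
  rcases e with ⟨⟨i, j⟩, d⟩
  fin_cases d
  · intro h
    have h' : (i, j) = (i + 1, j) := h
    rw [Prod.ext_iff] at h'
    exact one_ne_zero_zmodL hL (by linear_combination -h'.1)
  · intro h
    have h' : (i, j) = (i, j + 1) := h
    rw [Prod.ext_iff] at h'
    exact one_ne_zero_zmodL hL (by linear_combination -h'.2)

lemma zmod2_eq_of_add_eq_zero {a b : ZMod 2} (h : a + b = 0) : a = b := by
  revert a b; decide

lemma const_of_adj (c : ZMod L × ZMod L → ZMod 2)
    (h1 : ∀ i j : ZMod L, c (i + 1, j) = c (i, j))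
    (h2 : ∀ i j : ZMod L, c (i, j + 1) = c (i, j)) :
    ∀ v, c v = c (0, 0) := by
  have hk : ∀ (k : ℕ) (j : ZMod L), c ((k : ZMod L), j) = c (0, j) := by
    intro k
    induction k with
    | zero => intro j; norm_num
    | succ k ih =>
      intro j
      have hcast : ((k + 1 : ℕ) : ZMod L) = (k : ZMod L) + 1 := by push_cast; ring
      rw [hcast, h1, ih]
  have hj : ∀ (k : ℕ), c (0, (k : ZMod L)) = c (0, 0) := by
    intro k
    induction k with
    | zero => norm_num
    | succ k ih =>
      have hcast : ((k + 1 : ℕ) : ZMod L) = (k : ZMod L) + 1 := by push_cast; ring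
      rw [hcast, h2, ih]
  rintro ⟨i, j⟩
  obtain ⟨a, rfl⟩ := ZMod.natCast_zmod_surjective i
  obtain ⟨b, rfl⟩ := ZMod.natCast_zmod_surjective j
  rw [hk, hj]

include hL in
lemma ker_tD2_card :
    (Finset.univ.filter fun c : TP L → ZMod 2 => tD2 L c = 0).card = 2 := by
  classical
  have hset : (Finset.univ.filter fun c : TP L → ZMod 2 => tD2 L c = 0)
      = {(0 : TP L → ZMod 2), fun _ => 1} := by
    ext c
    simp only [Finset.mem_filter, Finset.mem_univ, true_and, Finset.mem_insert,
      Finset.mem_singleton]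
    constructor
    · intro hc
      have h2' : ∀ i j : ZMod L, c (i, j + 1) = c (i, j) := by
        intro i j
        have := congrFun hc ((i, j + 1), (0 : Fin 2))
        rw [tD2_apply0 hL] at this
        have := zmod2_eq_of_add_eq_zero this
        rwa [add_sub_cancel_right] at this
      have h1' : ∀ i j : ZMod L, c (i + 1, j) = c (i, j) := by
        intro i j
        have := congrFun hc ((i + 1, j), (1 : Fin 2))
        rw [tD2_apply1 hL] at this
        have := zmod2_eq_of_add_eq_zero this
        rwa [add_sub_cancel_right] at this
      have hconst := const_of_adj c h1' h2'
      rcases zmod2_cases' (c (0, 0)) with h0 | h0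
      · left; funext v; rw [hconst v, h0]; rfl
      · right; funext v; rw [hconst v, h0]
    · rintro (rfl | rfl)
      · exact map_zero _
      · funext e
        rcases e with ⟨⟨i, j⟩, d⟩
        rcases (by decide : ∀ d : Fin 2, d = 0 ∨ d = 1) d with rfl | rfl
        · rw [Pi.zero_apply, tD2_apply0 hL]; decide
        · rw [Pi.zero_apply, tD2_apply1 hL]; decide
  rw [hset]
  rw [Finset.card_insert_of_notMem, Finset.card_singleton]
  simp only [Finset.mem_singleton]
  intro h
  have := congrFun h (0, 0)
  rw [Pi.zero_apply] at this
  exact zero_ne_one this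

include hL in
lemma ker_tD2s_card :
    (Finset.univ.filter fun x : TV L → ZMod 2 => tD2s L x = 0).card = 2 := by
  classical
  have hset : (Finset.univ.filter fun x : TV L → ZMod 2 => tD2s L x = 0)
      = {(0 : TV L → ZMod 2), fun _ => 1} := by
    ext x
    simp only [Finset.mem_filter, Finset.mem_univ, true_and, Finset.mem_insert,
      Finset.mem_singleton]
    constructor
    · intro hx
      have h1' : ∀ i j : ZMod L, x (i + 1, j) = x (i, j) := by
        intro i j
        have := congrFun hx ((i, j), (0 : Fin 2))
        rw [tD2s_apply hL] at this
        exact (zmod2_eq_of_add_eq_zero this).symm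
      have h2' : ∀ i j : ZMod L, x (i, j + 1) = x (i, j) := by
        intro i j
        have := congrFun hx ((i, j), (1 : Fin 2))
        rw [tD2s_apply hL] at this
        exact (zmod2_eq_of_add_eq_zero this).symm
      have hconst := const_of_adj x h1' h2'
      rcases zmod2_cases' (x (0, 0)) with h0 | h0
      · left; funext v; rw [hconst v, h0]; rfl
      · right; funext v; rw [hconst v, h0]
    · rintro (rfl | rfl)
      · exact map_zero _
      · funext e
        rw [Pi.zero_apply, tD2s_apply hL]
        decide
  rw [hset]
  rw [Finset.card_insert_of_notMem, Finset.card_singleton]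
  simp only [Finset.mem_singleton]
  intro h
  have := congrFun h (0, 0)
  rw [Pi.zero_apply] at this
  exact zero_ne_one this

end Toric



/-- The sign character of `F₂`. -/
def chi (z : ZMod 2) : ℝ := if z = 0 then 1 else -1

lemma zmod2_cases (a : ZMod 2) : a = 0 ∨ a = 1 := by revert a; decide

lemma chi_add (a b : ZMod 2) : chi (a + b) = chi a * chi b := by
  rcases zmod2_cases a with rfl | rfl <;> rcases zmod2_cases b with rfl | rfl <;>
    simp [chi, show (1+1 : ZMod 2) = 0 from rfl]

lemma chi_sum {α : Type*} (s : Finset α) (f : α → ZMod 2) :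
    chi (∑ a ∈ s, f a) = ∏ a ∈ s, chi (f a) := by
  classical
  induction s using Finset.cons_induction with
  | empty => simp [chi]
  | cons a s ha ih => rw [Finset.sum_cons, Finset.prod_cons, chi_add, ih]

lemma sum_chi_zmod2 (f : ZMod 2 → ℝ) : ∑ b : ZMod 2, f b = f 0 + f 1 := by
  rw [show (Finset.univ : Finset (ZMod 2)) = {0, 1} from rfl]
  simp [Finset.sum_insert, Finset.mem_singleton]

lemma sum_zmod2_sq (g : ZMod 2 × ZMod 2 → ℝ) :
    ∑ z : ZMod 2 × ZMod 2, g z = g (0,0) + g (0,1) + g (1,0) + g (1,1) := by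
  rw [Fintype.sum_prod_type]
  rw [sum_chi_zmod2 (fun a => ∑ b : ZMod 2, g (a, b)), sum_chi_zmod2, sum_chi_zmod2]
  ring

/-- Orthogonality over the full space. -/
lemma sum_chi_dot {β : Type*} [Fintype β] [DecidableEq β] (w : β → ZMod 2) :
    ∑ u : β → ZMod 2, chi (∑ a, u a * w a) =
      if w = 0 then (2 : ℝ) ^ Fintype.card β else 0 := by
  have h1 : ∀ u : β → ZMod 2, chi (∑ a, u a * w a) = ∏ a, chi (u a * w a) :=
    fun u => chi_sum _ _
  simp only [h1]
  rw [← Fintype.prod_sum (fun a (b : ZMod 2) => chi (b * w a))]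
  have h2 : ∀ a : β, (∑ b : ZMod 2, chi (b * w a)) = if w a = 0 then 2 else 0 := by
    intro a
    rcases zmod2_cases (w a) with h | h <;> rw [h] <;>
      simp [sum_chi_zmod2, chi]
  simp only [h2]
  by_cases hw : w = 0
  · subst hw; simp
  · obtain ⟨a, ha⟩ : ∃ a, w a ≠ 0 := by
      by_contra h; push_neg at h; exact hw (funext h)
    rw [if_neg hw]
    exact Finset.prod_eq_zero (Finset.mem_univ a) (by simp [ha])

lemma zmod2_fun_add_self {β : Type*} (y : β → ZMod 2) : y + y = 0 := by
  funext a
  have : ∀ z : ZMod 2, z + z = 0 := by decide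
  exact this (y a)

/-- Summing over the image of a linear map counts each value `#ker` times. -/
lemma sum_range_eq {P E : Type*} [Fintype P] [Fintype E] [DecidableEq P] [DecidableEq E]
    (D : (P → ZMod 2) →ₗ[ZMod 2] (E → ZMod 2)) (h : (E → ZMod 2) → ℝ) :
    ∑ u : P → ZMod 2, h (D u) =
      ((Finset.univ.filter fun u : P → ZMod 2 => D u = 0).card : ℝ) *
        ∑ y ∈ Finset.univ.filter (fun y : E → ZMod 2 => ∃ c, D c = y), h y := by
  classical
  rw [← Finset.sum_fiberwise_of_maps_to (g := fun u => D u)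
    (t := Finset.univ.filter (fun y : E → ZMod 2 => ∃ c, D c = y))
    (fun u _ => by simp) (fun u => h (D u))]
  rw [Finset.mul_sum]
  refine Finset.sum_congr rfl fun y hy => ?_
  simp only [Finset.mem_filter, Finset.mem_univ, true_and] at hy
  obtain ⟨c₀, rfl⟩ := hy
  have : ∀ u ∈ Finset.univ.filter (fun u : P → ZMod 2 => D u = D c₀),
      h (D u) = h (D c₀) := by
    intro u hu
    simp only [Finset.mem_filter] at hu
    rw [hu.2]
  rw [Finset.sum_congr rfl this, Finset.sum_const, nsmul_eq_mul]
  congr 2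
  apply Finset.card_nbij' (fun u => u + c₀) (fun u => u + c₀)
  · intro u hu
    simp only [Finset.mem_coe, Finset.mem_filter, Finset.mem_univ, true_and] at hu ⊢
    rw [map_add, hu, zmod2_fun_add_self]
  · intro u hu
    simp only [Finset.mem_coe, Finset.mem_filter, Finset.mem_univ, true_and] at hu ⊢
    rw [map_add, hu, zero_add]
  · intro u _; dsimp only; rw [add_assoc, zmod2_fun_add_self, add_zero]
  · intro u _; dsimp only; rw [add_assoc, zmod2_fun_add_self, add_zero]

lemma sum_comm4 {α β γ δ M : Type*} [AddCommMonoid M] [Fintype α] [Fintype β]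
    [Fintype γ] [Fintype δ] (f : α → β → γ → δ → M) :
    ∑ a : α, ∑ b : β, ∑ c : γ, ∑ d : δ, f a b c d
      = ∑ c : γ, ∑ d : δ, ∑ a : α, ∑ b : β, f a b c d := by
  have h1 : ∀ a : α, ∑ b : β, ∑ c : γ, ∑ d : δ, f a b c d
      = ∑ c : γ, ∑ d : δ, ∑ b : β, f a b c d := by
    intro a
    rw [Finset.sum_comm]
    exact Finset.sum_congr rfl fun c _ => Finset.sum_comm
  simp only [h1]
  rw [Finset.sum_comm]
  exact Finset.sum_congr rfl fun c _ => Finset.sum_comm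

lemma dot_mulVec_swap {β γ : Type*} [Fintype β] [Fintype γ] (M : Matrix β γ (ZMod 2))
    (u : γ → ZMod 2) (c : β → ZMod 2) :
    ∑ a, (M.mulVec u) a * c a = ∑ q, u q * (M.transpose.mulVec c) q := by
  simp only [Matrix.mulVec, dotProduct, Matrix.transpose_apply,
    Finset.sum_mul, Finset.mul_sum]
  rw [Finset.sum_comm]
  exact Finset.sum_congr rfl fun q _ => Finset.sum_congr rfl fun a _ => by ring

section Part2'

variable {α : Type*} [Fintype α] [DecidableEq α]

lemma wt_orv_eq (x x' : α → ZMod 2) :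
    wt (orv x x') = (Finset.univ.filter fun a => ¬(x a = 0 ∧ x' a = 0)).card := by
  unfold wt orv
  congr 1
  apply Finset.filter_congr
  intro a _
  by_cases h : x a = 0 ∧ x' a = 0 <;> simp [h]

lemma prod_ite_orv (x x' : α → ZMod 2) (r s : ℝ) :
    ∏ a, (if x a = 0 ∧ x' a = 0 then r else s) =
      r ^ (Fintype.card α - wt (orv x x')) * s ^ wt (orv x x') := by
  rw [Finset.prod_ite (fun _ => r) (fun _ => s), Finset.prod_const, Finset.prod_const,
    wt_orv_eq]
  congr 2
  have := Finset.card_filter_add_card_filter_not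
    (s := (Finset.univ : Finset α)) (p := fun a => x a = 0 ∧ x' a = 0)
  rw [Finset.card_univ] at this
  omega

end Part2'

section Dagger
variable {α : Type*} [Fintype α] [DecidableEq α]

lemma dagger (p : ℝ) (x x' : α → ZMod 2) :
    ∑ c : α → ZMod 2, ∑ c' : α → ZMod 2,
        (1 - 4 * p / 3) ^ wt (orv c c') * (chi (∑ a, x a * c a) * chi (∑ a, x' a * c' a))
      = (4 : ℝ) ^ Fintype.card α *
        ((1 - p) ^ (Fintype.card α - wt (orv x x')) * (p / 3) ^ wt (orv x x')) := by
  have hterm : ∀ c c' : α → ZMod 2,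
      (1 - 4 * p / 3) ^ wt (orv c c') * (chi (∑ a, x a * c a) * chi (∑ a, x' a * c' a))
        = ∏ a, ((if c a = 0 ∧ c' a = 0 then (1 : ℝ) else (1 - 4 * p / 3)) *
            (chi (x a * c a) * chi (x' a * c' a))) := by
    intro c c'
    have h1 : (1 - 4 * p / 3) ^ wt (orv c c')
        = ∏ a, (if c a = 0 ∧ c' a = 0 then (1 : ℝ) else (1 - 4 * p / 3)) := by
      rw [prod_ite_orv c c' 1 (1 - 4 * p / 3), one_pow, one_mul]
    rw [h1, chi_sum, chi_sum, ← Finset.prod_mul_distrib, ← Finset.prod_mul_distrib]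
  simp only [hterm]
  rw [← Fintype.sum_prod_type']
  -- now a single sum over (α → ZMod 2) × (α → ZMod 2)
  rw [← Fintype.sum_equiv (Equiv.arrowProdEquivProdArrow α (fun _ => ZMod 2) (fun _ => ZMod 2))
    (fun w : α → ZMod 2 × ZMod 2 => ∏ a,
      ((if (w a).1 = 0 ∧ (w a).2 = 0 then (1 : ℝ) else (1 - 4 * p / 3)) *
        (chi (x a * (w a).1) * chi (x' a * (w a).2))))
    _ (fun w => rfl)]
  rw [← Fintype.prod_sum (fun a (z : ZMod 2 × ZMod 2) =>
    (if z.1 = 0 ∧ z.2 = 0 then (1 : ℝ) else (1 - 4 * p / 3)) *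
      (chi (x a * z.1) * chi (x' a * z.2)))]
  have hcoord : ∀ a : α, (∑ z : ZMod 2 × ZMod 2,
      (if z.1 = 0 ∧ z.2 = 0 then (1 : ℝ) else (1 - 4 * p / 3)) *
        (chi (x a * z.1) * chi (x' a * z.2)))
      = 4 * (if x a = 0 ∧ x' a = 0 then 1 - p else p / 3) := by
    intro a
    rw [sum_zmod2_sq]
    rcases zmod2_cases (x a) with h | h <;> rcases zmod2_cases (x' a) with h' | h' <;>
      rw [h, h'] <;>
      simp [chi, show (1 : ZMod 2) ≠ 0 by decide] <;> ring
  rw [Finset.prod_congr rfl (fun a _ => hcoord a), Finset.prod_mul_distrib,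
    Finset.prod_const, prod_ite_orv, Finset.card_univ]

end Dagger


/-- **Kramers–Wannier–MacWilliams duality for the toric code under depolarizing
noise.**  With `n = 2L²` qubits and `m = L²` plaquettes, the probability of the
stabilizer coset `(e_Z, e_X) + C_Z^⊥ × C_X^⊥ = (e_Z + im ∂₂) × (e_X + im ∂₂^*)` under
the depolarizing channel with parameter `p` equals
`4^{−(n−m+1)} Σ_{c ∈ ker ∂₁^*} Σ_{c' ∈ ker ∂₁} (1−4p/3)^{wt(c ∨ c')}
(−1)^{⟨e_Z,c⟩+⟨e_X,c'⟩}`, a jointly weighted sum over all pairs of a dual cycle and a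
primal cycle. -/
theorem toric_coset_probability_depolarizing_dual_expansion
    (L n m : ℕ) [NeZero L] (hL : 3 ≤ L)
    (hn : n = 2 * L ^ 2) (hm : m = L ^ 2)
    (p : ℝ) (hp0 : 0 < p) (hp1 : p < 1)
    (eZ eX : TE L → ZMod 2) :
    ∑ y ∈ Finset.univ.filter (fun y : TE L → ZMod 2 => ∃ c, tD2 L c = y),
      ∑ y' ∈ Finset.univ.filter (fun y' : TE L → ZMod 2 => ∃ x, tD2s L x = y'),
        (1 - p) ^ (n - wt (orv (eZ + y) (eX + y'))) *
          (p / 3) ^ wt (orv (eZ + y) (eX + y'))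
    = (4 : ℝ) ^ (-((n : ℤ) - (m : ℤ) + 1)) *
        ∑ c ∈ Finset.univ.filter (fun c : TE L → ZMod 2 => tD1s L c = 0),
          ∑ c' ∈ Finset.univ.filter (fun c' : TE L → ZMod 2 => tD1 L c' = 0),
            (1 - 4 * p / 3) ^ wt (orv c c') *
              (if (∑ a, eZ a * c a) + (∑ a, eX a * c' a) = (0 : ZMod 2)
               then (1 : ℝ) else -1) := by
  classical
  have hE : Fintype.card (TE L) = n := by
    simp only [Fintype.card_prod, ZMod.card, Fintype.card_fin, hn]; ring
  have hP : Fintype.card (TP L) = m := by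
    simp only [Fintype.card_prod, ZMod.card, hm]; ring
  have hV : Fintype.card (TV L) = m := by
    simp only [Fintype.card_prod, ZMod.card, hm]; ring
  -- notation
  set F : (TE L → ZMod 2) → (TE L → ZMod 2) → ℝ := fun x x' =>
    (1 - p) ^ (n - wt (orv x x')) * (p / 3) ^ wt (orv x x') with hFdef
  set T : (TE L → ZMod 2) → (TE L → ZMod 2) → ℝ := fun c c' =>
    (1 - 4 * p / 3) ^ wt (orv c c') with hTdef
  set LHS : ℝ := ∑ y ∈ Finset.univ.filter (fun y : TE L → ZMod 2 => ∃ c, tD2 L c = y),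
      ∑ y' ∈ Finset.univ.filter (fun y' : TE L → ZMod 2 => ∃ x, tD2s L x = y'),
        F (eZ + y) (eX + y') with hLHSdef
  -- Step 1 : unfold the coset sums as sums over preimages
  have step1 : ∑ u : TP L → ZMod 2, ∑ v : TV L → ZMod 2,
      F (eZ + tD2 L u) (eX + tD2s L v) = 4 * LHS := by
    have inner : ∀ y : TE L → ZMod 2, ∑ v : TV L → ZMod 2, F (eZ + y) (eX + tD2s L v)
        = 2 * ∑ y' ∈ Finset.univ.filter (fun y' : TE L → ZMod 2 => ∃ x, tD2s L x = y'),
            F (eZ + y) (eX + y') := by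
      intro y
      rw [sum_range_eq (tD2s L) (fun y' => F (eZ + y) (eX + y')), ker_tD2s_card hL]
      norm_num
    calc ∑ u : TP L → ZMod 2, ∑ v : TV L → ZMod 2, F (eZ + tD2 L u) (eX + tD2s L v)
        = ∑ u : TP L → ZMod 2, 2 * ∑ y' ∈ Finset.univ.filter
            (fun y' : TE L → ZMod 2 => ∃ x, tD2s L x = y'), F (eZ + tD2 L u) (eX + y') :=
          Finset.sum_congr rfl fun u _ => inner (tD2 L u)
      _ = 2 * ∑ u : TP L → ZMod 2, ∑ y' ∈ Finset.univ.filter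
            (fun y' : TE L → ZMod 2 => ∃ x, tD2s L x = y'), F (eZ + tD2 L u) (eX + y') := by
          rw [Finset.mul_sum]
      _ = 2 * (2 * LHS) := by
          rw [sum_range_eq (tD2 L) (fun y => ∑ y' ∈ Finset.univ.filter
            (fun y' : TE L → ZMod 2 => ∃ x, tD2s L x = y'), F (eZ + y) (eX + y')),
            ker_tD2_card hL, hLHSdef]
          norm_num
      _ = 4 * LHS := by ring
  -- Step 2 : pointwise Fourier expansion
  have step2 : ∀ x x' : TE L → ZMod 2,
      ∑ c : TE L → ZMod 2, ∑ c' : TE L → ZMod 2,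
          T c c' * (chi (∑ a, x a * c a) * chi (∑ a, x' a * c' a))
        = (4 : ℝ) ^ n * F x x' := by
    intro x x'
    have := dagger p x x'
    rw [hE] at this
    exact this
  -- Step 3 : expand the double preimage sum
  have step3 : (4 : ℝ) ^ n * (∑ u : TP L → ZMod 2, ∑ v : TV L → ZMod 2,
        F (eZ + tD2 L u) (eX + tD2s L v))
      = ∑ c : TE L → ZMod 2, ∑ c' : TE L → ZMod 2, T c c' *
          ((∑ u : TP L → ZMod 2, chi (∑ a, (eZ + tD2 L u) a * c a)) *
            (∑ v : TV L → ZMod 2, chi (∑ a, (eX + tD2s L v) a * c' a))) := by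
    rw [Finset.mul_sum]
    calc ∑ u : TP L → ZMod 2, (4 : ℝ) ^ n * ∑ v : TV L → ZMod 2,
            F (eZ + tD2 L u) (eX + tD2s L v)
        = ∑ u : TP L → ZMod 2, ∑ v : TV L → ZMod 2, (4 : ℝ) ^ n *
            F (eZ + tD2 L u) (eX + tD2s L v) := by
          exact Finset.sum_congr rfl fun u _ => Finset.mul_sum _ _ _
      _ = ∑ u : TP L → ZMod 2, ∑ v : TV L → ZMod 2, ∑ c : TE L → ZMod 2,
            ∑ c' : TE L → ZMod 2, T c c' * (chi (∑ a, (eZ + tD2 L u) a * c a) *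
              chi (∑ a, (eX + tD2s L v) a * c' a)) := by
          exact Finset.sum_congr rfl fun u _ => Finset.sum_congr rfl fun v _ =>
            (step2 (eZ + tD2 L u) (eX + tD2s L v)).symm
      _ = ∑ c : TE L → ZMod 2, ∑ c' : TE L → ZMod 2, ∑ u : TP L → ZMod 2,
            ∑ v : TV L → ZMod 2, T c c' * (chi (∑ a, (eZ + tD2 L u) a * c a) *
              chi (∑ a, (eX + tD2s L v) a * c' a)) := sum_comm4 _
      _ = _ := by
          refine Finset.sum_congr rfl fun c _ => Finset.sum_congr rfl fun c' _ => ?_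
          rw [Finset.sum_mul_sum, Finset.mul_sum]
          refine Finset.sum_congr rfl fun u _ => ?_
          rw [Finset.mul_sum]
  -- Step 4 : character orthogonality
  have hOrthU : ∀ c : TE L → ZMod 2,
      ∑ u : TP L → ZMod 2, chi (∑ a, (eZ + tD2 L u) a * c a)
        = chi (∑ a, eZ a * c a) * (if tD1s L c = 0 then (2 : ℝ) ^ m else 0) := by
    intro c
    have hsplit : ∀ u : TP L → ZMod 2, (∑ a, (eZ + tD2 L u) a * c a)
        = (∑ a, eZ a * c a) + ∑ q, u q * tD1s L c q := by
      intro u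
      rw [show tD1s L c = (tM2 L).transpose.mulVec c from rfl,
        ← dot_mulVec_swap (tM2 L) u c, ← Finset.sum_add_distrib]
      refine Finset.sum_congr rfl fun a _ => ?_
      rw [Pi.add_apply, show tD2 L u = (tM2 L).mulVec u from rfl]
      ring
    calc ∑ u : TP L → ZMod 2, chi (∑ a, (eZ + tD2 L u) a * c a)
        = ∑ u : TP L → ZMod 2, chi (∑ a, eZ a * c a) * chi (∑ q, u q * tD1s L c q) := by
          exact Finset.sum_congr rfl fun u _ => by rw [hsplit u, chi_add]
      _ = chi (∑ a, eZ a * c a) * ∑ u : TP L → ZMod 2, chi (∑ q, u q * tD1s L c q) := by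
          rw [Finset.mul_sum]
      _ = _ := by rw [sum_chi_dot (tD1s L c), hP]
  have hOrthV : ∀ c' : TE L → ZMod 2,
      ∑ v : TV L → ZMod 2, chi (∑ a, (eX + tD2s L v) a * c' a)
        = chi (∑ a, eX a * c' a) * (if tD1 L c' = 0 then (2 : ℝ) ^ m else 0) := by
    intro c'
    have hsplit : ∀ v : TV L → ZMod 2, (∑ a, (eX + tD2s L v) a * c' a)
        = (∑ a, eX a * c' a) + ∑ q, v q * tD1 L c' q := by
      intro v
      rw [show tD1 L c' = ((tM1 L).transpose).transpose.mulVec c' from by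
        rw [Matrix.transpose_transpose]; rfl,
        ← dot_mulVec_swap ((tM1 L).transpose) v c', ← Finset.sum_add_distrib]
      refine Finset.sum_congr rfl fun a _ => ?_
      rw [Pi.add_apply, show tD2s L v = (tM1 L).transpose.mulVec v from rfl]
      ring
    calc ∑ v : TV L → ZMod 2, chi (∑ a, (eX + tD2s L v) a * c' a)
        = ∑ v : TV L → ZMod 2, chi (∑ a, eX a * c' a) * chi (∑ q, v q * tD1 L c' q) := by
          exact Finset.sum_congr rfl fun v _ => by rw [hsplit v, chi_add]
      _ = chi (∑ a, eX a * c' a) * ∑ v : TV L → ZMod 2, chi (∑ q, v q * tD1 L c' q) := by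
          rw [Finset.mul_sum]
      _ = _ := by rw [sum_chi_dot (tD1 L c'), hV]
  -- Step 5 : collapse to kernel sums
  have step5 : ∑ c : TE L → ZMod 2, ∑ c' : TE L → ZMod 2, T c c' *
        ((chi (∑ a, eZ a * c a) * (if tD1s L c = 0 then (2 : ℝ) ^ m else 0)) *
          (chi (∑ a, eX a * c' a) * (if tD1 L c' = 0 then (2 : ℝ) ^ m else 0)))
      = ∑ c ∈ Finset.univ.filter (fun c : TE L → ZMod 2 => tD1s L c = 0),
          ∑ c' ∈ Finset.univ.filter (fun c' : TE L → ZMod 2 => tD1 L c' = 0),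
            (2 : ℝ) ^ m * (2 : ℝ) ^ m *
              (T c c' * (chi (∑ a, eZ a * c a) * chi (∑ a, eX a * c' a))) := by
    simp only [Finset.sum_filter]
    refine Finset.sum_congr rfl fun c _ => ?_
    by_cases h1 : tD1s L c = 0
    · rw [if_pos h1, if_pos h1]
      apply Finset.sum_congr rfl
      intro c' _
      by_cases h2 : tD1 L c' = 0
      · rw [if_pos h2, if_pos h2]; ring
      · rw [if_neg h2, if_neg h2]; ring
    · rw [if_neg h1]
      simp [h1]
  -- final bookkeeping
  have hchi : ∀ c c' : TE L → ZMod 2,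
      chi (∑ a, eZ a * c a) * chi (∑ a, eX a * c' a)
        = (if (∑ a, eZ a * c a) + (∑ a, eX a * c' a) = (0 : ZMod 2)
            then (1 : ℝ) else -1) := by
    intro c c'
    rw [← chi_add]
    rfl
  have hQ : (4 : ℝ) ^ n * (4 * LHS) = (2 : ℝ) ^ m * (2 : ℝ) ^ m *
      ∑ c ∈ Finset.univ.filter (fun c : TE L → ZMod 2 => tD1s L c = 0),
        ∑ c' ∈ Finset.univ.filter (fun c' : TE L → ZMod 2 => tD1 L c' = 0),
          T c c' * (if (∑ a, eZ a * c a) + (∑ a, eX a * c' a) = (0 : ZMod 2)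
            then (1 : ℝ) else -1) := by
    rw [← step1, step3]
    simp only [hOrthU, hOrthV]
    rw [step5, Finset.mul_sum]
    refine Finset.sum_congr rfl fun c _ => ?_
    rw [Finset.mul_sum]
    refine Finset.sum_congr rfl fun c' _ => ?_
    rw [hchi c c']
  have hconst : (4 : ℝ) ^ (-((n : ℤ) - (m : ℤ) + 1)) =
      (2 : ℝ) ^ m * (2 : ℝ) ^ m / ((4 : ℝ) ^ n * 4) := by
    have h4 : (4 : ℝ) ≠ 0 := by norm_num
    rw [show (2 : ℝ) ^ m * (2 : ℝ) ^ m = (4 : ℝ) ^ m by rw [← mul_pow]; norm_num]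
    rw [eq_div_iff (by positivity)]
    rw [← zpow_natCast (4 : ℝ) m, ← zpow_natCast (4 : ℝ) n,
      show ((4 : ℝ) ^ (-((n : ℤ) - (m : ℤ) + 1)) * ((4 : ℝ) ^ (n : ℤ) * 4) : ℝ)
        = (4 : ℝ) ^ (-((n : ℤ) - (m : ℤ) + 1)) * ((4 : ℝ) ^ (n : ℤ) * (4 : ℝ) ^ (1 : ℤ))
        from by rw [zpow_one],
      ← zpow_add₀ h4, ← zpow_add₀ h4]
    congr 1
    ring
  show LHS = _
  rw [hconst, div_mul_eq_mul_div, eq_div_iff (by positivity)]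
  linear_combination hQ
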